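/- Fix $b<a$ in $\{1,\dots,n\}$ and let $G_c(u)=\prod_{j<c}(1+z_ju)\prod_{j>c}(1-z_ju)$, $\Theta_n(u)=\prod_{j=1}^n(1-z_ju)$, with $z_1,\dots,z_n$ distinct nonzero complex numbers with pairwise distinct squares. Then $\sum_{c=1}^n\operatorname{res}_{u=z_c^{-1}}\left(\frac{-G_a(u)G_b(-u)}{\Theta_n(-u)\Theta_n(u)}\cdot\frac{1}{u-t}\right)=\frac{1}{1-z_bt}\left(\prod_{b<j<a}\frac{1+z_jt}{1-z_jt}\right)\frac{1}{1-z_at}$, for $t$ not equal to any $\pm z_c^{-1}$. -/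

import Mathlib

open Filter Polynomial Finset

lemma sum_eval_mul_nodalWeight_eq_zero {F : Type*} [Field F] {ι : Type*} [DecidableEq ι]
    (s : Finset ι) (v : ι → F) (hvs : Set.InjOn v s) (P : F[X])
    (hdeg : P.degree < ((s.card - 1 : ℕ) : WithBot ℕ)) :
    ∑ i ∈ s, P.eval (v i) * Lagrange.nodalWeight s v i = 0 := by
  have h2 : P.degree < (s.card : WithBot ℕ) := by
    refine lt_of_lt_of_le hdeg ?_
    exact_mod_cast Nat.sub_le _ _
  have hP := Lagrange.eq_interpolate hvs h2
  have hco := congrArg (fun q : F[X] => q.coeff (s.card - 1)) hP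
  simp only [Lagrange.interpolate_apply, Polynomial.finset_sum_coeff] at hco
  rw [Polynomial.coeff_eq_zero_of_degree_lt hdeg] at hco
  have key : ∑ i ∈ s, P.eval (v i) * Lagrange.nodalWeight s v i
      = ∑ b ∈ s, (C (eval (v b) P) * Lagrange.basis s v b).coeff (s.card - 1) := by
    refine Finset.sum_congr rfl fun i hi => ?_
    rw [Polynomial.coeff_C_mul]
    congr 1
    have hb : Lagrange.basis s v i
        = C (Lagrange.nodalWeight s v i) * Lagrange.nodal (s.erase i) v := by
      rw [Lagrange.basis_eq_prod_sub_inv_mul_nodal_div hi, Lagrange.nodal_erase_eq_nodal_div hi]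
    rw [hb, Polynomial.coeff_C_mul]
    have hm : (Lagrange.nodal (s.erase i) v).Monic := Lagrange.nodal_monic
    have hd : (Lagrange.nodal (s.erase i) v).natDegree = s.card - 1 := by
      rw [Lagrange.natDegree_nodal, Finset.card_erase_of_mem hi]
    rw [← hd, hm.coeff_natDegree, mul_one]
  rw [key, ← hco]

set_option maxHeartbeats 1000000 in
/-- For `b < a`, distinct nonzero `z₁,…,zₙ` with pairwise distinct squares,
and `t ≠ ±z_c⁻¹`, the sum of the residues of
`f(u) = -G_a(u)G_b(-u)/(Θₙ(-u)Θₙ(u)(u-t))` at `u = z_c⁻¹` equals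
`1/(1-z_b t) · ∏_{b<j<a} (1+z_j t)/(1-z_j t) · 1/(1-z_a t)`.  Residues of the simple poles
are expressed as limits `r_c = lim_{u→z_c⁻¹} (u - z_c⁻¹) f(u)`. -/
theorem stmt9 (n : ℕ) (a b : Fin n) (hba : b < a) (z : Fin n → ℂ)
    (hz0 : ∀ c, z c ≠ 0) (hzsq : ∀ c c', c ≠ c' → z c ^ 2 ≠ z c' ^ 2)
    (t : ℂ) (ht : ∀ c, t ≠ (z c)⁻¹ ∧ t ≠ -(z c)⁻¹) :
    let G : Fin n → ℂ → ℂ := fun c u =>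
      (∏ j ∈ Finset.Iio c, (1 + z j * u)) * ∏ j ∈ Finset.Ioi c, (1 - z j * u)
    let Θ : ℂ → ℂ := fun u => ∏ j : Fin n, (1 - z j * u)
    let f : ℂ → ℂ := fun u => (-(G a u * G b (-u))) / (Θ (-u) * Θ u * (u - t))
    ∃ r : Fin n → ℂ,
      (∀ c, Filter.Tendsto (fun u => (u - (z c)⁻¹) * f u)
        (nhdsWithin (z c)⁻¹ {(z c)⁻¹}ᶜ) (nhds (r c))) ∧
      ∑ c, r c =
        1 / (1 - z b * t) * (∏ j ∈ Finset.Ioo b a, (1 + z j * t) / (1 - z j * t)) *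
          (1 / (1 - z a * t)) := by
  intro G Θ f
  classical
  -- basic nonvanishing facts
  have hzinj : Function.Injective z := by
    intro i j h
    by_contra hne
    exact hzsq i j hne (by rw [h])
  have hminus_iff : ∀ (j : Fin n) (w : ℂ), 1 - z j * w = 0 ↔ w = (z j)⁻¹ := by
    intro j w
    rw [sub_eq_zero, eq_comm, mul_comm, mul_eq_one_iff_eq_inv₀ (hz0 j)]
  have hplus_iff : ∀ (j : Fin n) (w : ℂ), 1 + z j * w = 0 ↔ w = -(z j)⁻¹ := by
    intro j w
    have h1 : 1 + z j * w = 1 - z j * (-w) := by ring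
    rw [h1, sub_eq_zero, eq_comm, mul_comm, mul_eq_one_iff_eq_inv₀ (hz0 j), neg_eq_iff_eq_neg]
  have hxne : ∀ (c j : Fin n), (z c)⁻¹ ≠ -(z j)⁻¹ := by
    intro c j h
    have h2 : z c = -z j := by
      rw [← inv_inv (z c), h, inv_neg, inv_inv]
    rcases eq_or_ne j c with rfl | hne
    · exact hz0 j (by linear_combination h2 / 2)
    · exact hzsq c j (fun hcj => hne hcj.symm) (by rw [h2]; ring)
  have hxinj : ∀ (c j : Fin n), j ≠ c → (z c)⁻¹ ≠ (z j)⁻¹ := by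
    intro c j hjc h
    exact hjc (hzinj (inv_injective h.symm))
  -- abbreviations
  set N : ℂ → ℂ := fun u => ∏ j ∈ Finset.Ioo b a, (1 + z j * u) with hNdef
  set D : ℂ → ℂ := fun u => ∏ j ∈ Finset.Icc b a, (1 - z j * u) with hDdef
  set E : ℂ → ℂ := fun u => ∏ j ∈ (Finset.Icc b a)ᶜ, (1 - z j * u) with hEdef
  set Dc : Fin n → ℂ → ℂ := fun c u => ∏ j ∈ (Finset.Icc b a).erase c, (1 - z j * u) with hDcdef
  -- the cancelled form of f
  have hfg : ∀ u : ℂ, (∀ j, 1 + z j * u ≠ 0) → (∀ j, 1 - z j * u ≠ 0) →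
      f u = -N u / (D u * (u - t)) := by
    intro u h1 h2
    have hTm : Θ (-u) = ∏ j, (1 + z j * u) := by
      simp only [Θ, mul_neg, sub_neg_eq_add]
    have hGb : G b (-u) = (∏ j ∈ Finset.Iio b, (1 - z j * u)) * ∏ j ∈ Finset.Ioi b, (1 + z j * u) := by
      simp only [G, mul_neg, sub_neg_eq_add, ← sub_eq_add_neg]
    have huni : Finset.Iio a ∪ Finset.Ioi b = Finset.univ := by
      ext j
      simp only [Finset.mem_union, Finset.mem_Iio, Finset.mem_Ioi, Finset.mem_univ, iff_true]
      rcases lt_or_ge j a with h | h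
      · exact Or.inl h
      · exact Or.inr (lt_of_lt_of_le hba h)
    have hint : Finset.Iio a ∩ Finset.Ioi b = Finset.Ioo b a := by
      ext j
      simp only [Finset.mem_inter, Finset.mem_Iio, Finset.mem_Ioi, Finset.mem_Ioo]
      exact and_comm
    have hplus : (∏ j ∈ Finset.Iio a, (1 + z j * u)) * ∏ j ∈ Finset.Ioi b, (1 + z j * u)
        = (∏ j, (1 + z j * u)) * N u := by
      rw [← Finset.prod_union_inter, huni, hint]
    have hdisj : Disjoint (Finset.Ioi a) (Finset.Iio b) := by
      rw [Finset.disjoint_left]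
      intro j hj hj'
      simp only [Finset.mem_Ioi] at hj
      simp only [Finset.mem_Iio] at hj'
      exact absurd (hj.trans hj') (not_lt.mpr hba.le)
    have hcompl : Finset.Ioi a ∪ Finset.Iio b = (Finset.Icc b a)ᶜ := by
      ext j
      simp only [Finset.mem_union, Finset.mem_Ioi, Finset.mem_Iio, Finset.mem_compl,
        Finset.mem_Icc, not_and_or, not_le]
      exact or_comm
    have hminus : (∏ j ∈ Finset.Ioi a, (1 - z j * u)) * ∏ j ∈ Finset.Iio b, (1 - z j * u)
        = E u := by
      rw [← Finset.prod_union hdisj, hcompl]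
    have hTheta : Θ u = D u * E u := (Finset.prod_mul_prod_compl _ _).symm
    have hnum : G a u * G b (-u) = (Θ (-u) * E u) * N u := by
      rw [hGb, hTm]
      have h := congrArg₂ (· * ·) hplus hminus
      show ((∏ j ∈ Finset.Iio a, (1 + z j * u)) * ∏ j ∈ Finset.Ioi a, (1 - z j * u)) * _ = _
      linear_combination h
    have hX : Θ (-u) * E u ≠ 0 := by
      refine mul_ne_zero ?_ ?_
      · rw [hTm]; exact Finset.prod_ne_zero_iff.mpr fun j _ => h1 j
      · exact Finset.prod_ne_zero_iff.mpr fun j _ => h2 j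
    show -(G a u * G b (-u)) / (Θ (-u) * Θ u * (u - t)) = -N u / (D u * (u - t))
    rw [hnum, hTheta]
    rw [show Θ (-u) * (D u * E u) * (u - t) = (Θ (-u) * E u) * (D u * (u - t)) by ring,
      neg_div, mul_div_mul_left _ _ hX, neg_div]
  -- eventual nonvanishing near each pole
  have hBev : ∀ c : Fin n, ∀ᶠ u in nhdsWithin (z c)⁻¹ {(z c)⁻¹}ᶜ,
      (∀ j, 1 + z j * u ≠ 0) ∧ (∀ j, 1 - z j * u ≠ 0) := by
    intro c
    set x := (z c)⁻¹ with hx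
    set Bad : Set ℂ := (Set.range fun j : Fin n => -(z j)⁻¹) ∪ (Set.range fun j : Fin n => (z j)⁻¹)
      with hBad
    have hBadfin : (Bad \ {x}).Finite := (((Set.finite_range _).union (Set.finite_range _)).diff)
    have hmem : (Bad \ {x})ᶜ ∈ nhds x :=
      hBadfin.isClosed.isOpen_compl.mem_nhds (by simp)
    filter_upwards [mem_nhdsWithin_of_mem_nhds hmem, self_mem_nhdsWithin] with u hu hux
    have hu' : u ∉ Bad := by
      intro hb
      exact hu ⟨hb, hux⟩
    constructor
    · intro j h
      exact hu' (Or.inl ⟨j, ((hplus_iff j u).mp h).symm⟩)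
    · intro j h
      exact hu' (Or.inr ⟨j, ((hminus_iff j u).mp h).symm⟩)
  -- continuity helpers
  have hNcont : Continuous N := continuous_finset_prod _ fun j _ => by fun_prop
  have hDcont : Continuous D := continuous_finset_prod _ fun j _ => by fun_prop
  have hDccont : ∀ c, Continuous (Dc c) := fun c => continuous_finset_prod _ fun j _ => by fun_prop
  -- residues
  set r : Fin n → ℂ := fun c =>
    if c ∈ Finset.Icc b a then (z c)⁻¹ * N (z c)⁻¹ / (Dc c (z c)⁻¹ * ((z c)⁻¹ - t)) else 0
    with hrdef
  refine ⟨r, fun c => ?_, ?_⟩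
  · -- the limits
    set x := (z c)⁻¹ with hx
    have hxt : x - t ≠ 0 := sub_ne_zero.mpr (fun h => (ht c).1 h.symm)
    by_cases hc : c ∈ Finset.Icc b a
    · have hev : ∀ᶠ u in nhdsWithin x {x}ᶜ,
          (z c)⁻¹ * N u / (Dc c u * (u - t)) = (u - x) * f u := by
        filter_upwards [hBev c, self_mem_nhdsWithin] with u hu hux
        obtain ⟨h1, h2⟩ := hu
        have hune : u ≠ x := hux
        have huxne : u - x ≠ 0 := sub_ne_zero.mpr hune
        rw [hfg u h1 h2]
        have hDu : D u = (1 - z c * u) * Dc c u := (Finset.mul_prod_erase _ _ hc).symm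
        have hfac : 1 - z c * u = -z c * (u - x) := by
          rw [hx]
          linear_combination -mul_inv_cancel₀ (hz0 c)
        have hfacne : 1 - z c * u ≠ 0 := h2 c
        rcases eq_or_ne (Dc c u * (u - t)) 0 with h0 | h0
        · have hD0 : D u * (u - t) = 0 := by
            rw [hDu, mul_assoc, h0, mul_zero]
          rw [hD0, div_zero, mul_zero, h0, div_zero]
        · have hDcne : Dc c u ≠ 0 := fun h => h0 (by rw [h, zero_mul])
          have hutne : u - t ≠ 0 := fun h => h0 (by rw [h, mul_zero])
          have hzc : z c ≠ 0 := hz0 c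
          have hden : D u * (u - t) = (u - x) * (-z c * (Dc c u * (u - t))) := by
            rw [hDu, hfac]; ring
          rw [hden, mul_div_assoc', mul_div_mul_left _ _ huxne]
          rw [div_eq_div_iff (mul_ne_zero hDcne hutne)
            (mul_ne_zero (neg_ne_zero.mpr hzc) (mul_ne_zero hDcne hutne))]
          field_simp
      have hcont : ContinuousAt (fun u => (z c)⁻¹ * N u / (Dc c u * (u - t))) x := by
        refine ContinuousAt.div (by fun_prop) (by fun_prop) ?_
        refine mul_ne_zero ?_ hxt
        refine Finset.prod_ne_zero_iff.mpr fun j hj => fun h => ?_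
        exact hxinj c j (Finset.ne_of_mem_erase hj) ((hminus_iff j x).mp h)
      have hrc : r c = (z c)⁻¹ * N x / (Dc c x * (x - t)) := by
        simp only [hrdef]; rw [if_pos hc]
      rw [hrc]
      exact (hcont.continuousWithinAt.tendsto).congr' hev
    · have hev : ∀ᶠ u in nhdsWithin x {x}ᶜ,
          (u - x) * (-N u / (D u * (u - t))) = (u - x) * f u := by
        filter_upwards [hBev c] with u hu
        obtain ⟨h1, h2⟩ := hu
        rw [hfg u h1 h2]
      have hDx : D x ≠ 0 := by
        refine Finset.prod_ne_zero_iff.mpr fun j hj => fun h => ?_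
        exact hxinj c j (fun h' => hc (h' ▸ hj)) ((hminus_iff j x).mp h)
      have hcont : ContinuousAt (fun u => (u - x) * (-N u / (D u * (u - t)))) x := by
        refine ContinuousAt.mul (by fun_prop) ?_
        exact ContinuousAt.div (by fun_prop) (by fun_prop) (mul_ne_zero hDx hxt)
      have hval : r c = 0 := by
        simp only [hrdef]; rw [if_neg hc]
      rw [hval]
      have htd : Filter.Tendsto (fun u => (u - x) * (-N u / (D u * (u - t))))
          (nhdsWithin x {x}ᶜ) (nhds ((x - x) * (-N x / (D x * (x - t))))) :=
        hcont.tendsto.mono_left (nhdsWithin_le_nhds (s := {x}ᶜ))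
      rw [show (x - x) * (-N x / (D x * (x - t))) = 0 by simp] at htd
      exact htd.congr' hev
  · -- the sum
    -- interval decomposition
    have hIcc : Finset.Icc b a = insert b (insert a (Finset.Ioo b a)) := by
      rw [Finset.Ioo_insert_right hba, Finset.Ioc_insert_left hba.le]
    have hbmem : b ∉ insert a (Finset.Ioo b a) := by
      simp [hba.ne, hba.ne']
    have hamem : a ∉ Finset.Ioo b a := by simp
    have hcard2 : (Finset.Icc b a).card = (Finset.Ioo b a).card + 2 := by
      rw [hIcc, Finset.card_insert_of_notMem hbmem, Finset.card_insert_of_notMem hamem]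
    -- nodes
    set v : Option (Fin n) → ℂ := fun o => o.elim t (fun j => (z j)⁻¹) with hvdef
    set M : Finset (Option (Fin n)) := (Finset.Icc b a).map Function.Embedding.some with hMdef
    set s : Finset (Option (Fin n)) := insert none M with hsdef
    have hnoneM : none ∉ M := by simp [hMdef]
    have hcards : s.card = (Finset.Icc b a).card + 1 := by
      rw [hsdef, Finset.card_insert_of_notMem hnoneM, hMdef, Finset.card_map]
    have hvnone : v none = t := by simp [hvdef]
    have hvsome : ∀ c, v (some c) = (z c)⁻¹ := fun c => by simp [hvdef]
    have hvs : Set.InjOn v s := by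
      intro i hi j hj hij
      cases i with
      | none =>
        cases j with
        | none => rfl
        | some d =>
          rw [hvnone, hvsome] at hij
          exact absurd hij (ht d).1
      | some d =>
        cases j with
        | none =>
          rw [hvnone, hvsome] at hij
          exact absurd hij.symm (ht d).1
        | some e =>
          rw [hvsome, hvsome] at hij
          exact congrArg some (hzinj (inv_injective hij))
    -- polynomial
    set P : Polynomial ℂ :=
      -∏ j ∈ Finset.Ioo b a, (1 + Polynomial.C (z j) * Polynomial.X) with hPdef
    have hPeval : ∀ w : ℂ, P.eval w = -N w := by
      intro w
      simp [hPdef, Polynomial.eval_prod, hNdef]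
    have hPdeg : P.degree < ((s.card - 1 : ℕ) : WithBot ℕ) := by
      have h1 : P.natDegree ≤ (Finset.Ioo b a).card := by
        rw [hPdef, Polynomial.natDegree_neg]
        refine le_trans (Polynomial.natDegree_prod_le _ _) ?_
        have h2 : ∀ j ∈ Finset.Ioo b a,
            (1 + Polynomial.C (z j) * Polynomial.X : Polynomial ℂ).natDegree ≤ 1 := by
          intro j _
          refine le_trans (Polynomial.natDegree_add_le _ _) ?_
          simp only [Polynomial.natDegree_one, max_le_iff]
          exact ⟨Nat.zero_le _, le_trans (Polynomial.natDegree_C_mul_le _ _) (by simp)⟩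
        calc ∑ j ∈ Finset.Ioo b a,
              (1 + Polynomial.C (z j) * Polynomial.X : Polynomial ℂ).natDegree
            ≤ ∑ _j ∈ Finset.Ioo b a, 1 := Finset.sum_le_sum h2
          _ = (Finset.Ioo b a).card := by simp
      refine lt_of_le_of_lt P.degree_le_natDegree ?_
      have h3 : P.natDegree < s.card - 1 := by
        rw [hcards, hcard2]
        omega
      exact_mod_cast h3
    have key := sum_eval_mul_nodalWeight_eq_zero s v hvs P hPdeg
    set W : Option (Fin n) → ℂ := Lagrange.nodalWeight s v with hWdef
    rw [hsdef, Finset.sum_insert hnoneM, hMdef, Finset.sum_map] at key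
    simp only [Function.Embedding.some_apply] at key
    -- key : P.eval (v none) * W none + ∑ c ∈ Icc, P.eval (v (some c)) * W (some c) = 0
    have hwnone : W none = ∏ j ∈ Finset.Icc b a, (t - (z j)⁻¹)⁻¹ := by
      rw [hWdef, Lagrange.nodalWeight]
      have h1 : s.erase none = M := by rw [hsdef, Finset.erase_insert hnoneM]
      rw [h1, hMdef, Finset.prod_map]
      simp [hvdef]
    have herase : ∀ c, s.erase (some c)
        = insert none (((Finset.Icc b a).erase c).map Function.Embedding.some) := by
      intro c
      rw [hsdef, Finset.erase_insert_of_ne (by simp), hMdef, Finset.map_erase]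
      rfl
    have hwsome : ∀ c, W (some c)
        = ((z c)⁻¹ - t)⁻¹ * ∏ j ∈ (Finset.Icc b a).erase c, ((z c)⁻¹ - (z j)⁻¹)⁻¹ := by
      intro c
      rw [hWdef, Lagrange.nodalWeight, herase c, Finset.prod_insert (by simp),
        Finset.prod_map]
      simp [hvdef]
    -- the constant K
    set K : ℂ := ∏ j ∈ Finset.Icc b a, (-z j)⁻¹ with hKdef
    have hrK : ∀ c ∈ Finset.Icc b a, r c = K * (P.eval (v (some c)) * W (some c)) := by
      intro c hc
      have hrc : r c = (z c)⁻¹ * N (z c)⁻¹ / (Dc c (z c)⁻¹ * ((z c)⁻¹ - t)) := by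
        simp only [hrdef]; rw [if_pos hc]
      have hDcfac : Dc c (z c)⁻¹
          = (∏ j ∈ (Finset.Icc b a).erase c, (-z j))
            * ∏ j ∈ (Finset.Icc b a).erase c, ((z c)⁻¹ - (z j)⁻¹) := by
        rw [hDcdef, ← Finset.prod_mul_distrib]
        refine Finset.prod_congr rfl fun j hj => ?_
        linear_combination -mul_inv_cancel₀ (hz0 j)
      have hKsplit : K = (-z c)⁻¹ * ∏ j ∈ (Finset.Icc b a).erase c, (-z j)⁻¹ :=
        (Finset.mul_prod_erase _ _ hc).symm
      have hp1 : ∏ j ∈ (Finset.Icc b a).erase c, (-z j)⁻¹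
          = (∏ j ∈ (Finset.Icc b a).erase c, (-z j))⁻¹ := by
        rw [← Finset.prod_inv_distrib]
      have hp2 : ∏ j ∈ (Finset.Icc b a).erase c, ((z c)⁻¹ - (z j)⁻¹)⁻¹
          = (∏ j ∈ (Finset.Icc b a).erase c, ((z c)⁻¹ - (z j)⁻¹))⁻¹ := by
        rw [← Finset.prod_inv_distrib]
      rw [hrc, hDcfac, hKsplit, hp1, hPeval, hvsome, hwsome, hp2, div_eq_mul_inv,
        mul_inv, mul_inv, inv_neg]
      ring
    have hsum1 : ∑ c, r c = ∑ c ∈ Finset.Icc b a, r c :=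
      (Finset.sum_subset (Finset.subset_univ _)
        (fun c _ hc => by simp only [hrdef]; rw [if_neg hc])).symm
    have hsum2 : ∑ c ∈ Finset.Icc b a, r c
        = K * ∑ c ∈ Finset.Icc b a, P.eval (v (some c)) * W (some c) := by
      rw [Finset.mul_sum]
      exact Finset.sum_congr rfl hrK
    have hkey2 : ∑ c ∈ Finset.Icc b a, P.eval (v (some c)) * W (some c)
        = N t * ∏ j ∈ Finset.Icc b a, (t - (z j)⁻¹)⁻¹ := by
      have h4 : ∑ c ∈ Finset.Icc b a, P.eval (v (some c)) * W (some c)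
          = -(P.eval (v none) * W none) := eq_neg_of_add_eq_zero_right key
      rw [h4, hwnone, hvnone, hPeval]
      ring
    have hKW : K * ∏ j ∈ Finset.Icc b a, (t - (z j)⁻¹)⁻¹
        = ∏ j ∈ Finset.Icc b a, (1 - z j * t)⁻¹ := by
      rw [hKdef, ← Finset.prod_mul_distrib]
      refine Finset.prod_congr rfl fun j _ => ?_
      rw [← mul_inv]
      congr 1
      linear_combination mul_inv_cancel₀ (hz0 j)
    have hIccprod : ∏ j ∈ Finset.Icc b a, (1 - z j * t)⁻¹
        = (1 - z b * t)⁻¹ * ((1 - z a * t)⁻¹ * ∏ j ∈ Finset.Ioo b a, (1 - z j * t)⁻¹) := by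
      rw [hIcc, Finset.prod_insert hbmem, Finset.prod_insert hamem]
    rw [hsum1, hsum2, hkey2,
      show K * (N t * ∏ j ∈ Finset.Icc b a, (t - (z j)⁻¹)⁻¹)
        = N t * (K * ∏ j ∈ Finset.Icc b a, (t - (z j)⁻¹)⁻¹) from by ring,
      hKW, hIccprod, Finset.prod_div_distrib]
    simp only [one_div, div_eq_mul_inv, hNdef]
    rw [← Finset.prod_inv_distrib]
    ring
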